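/- Let λ_M = arccos((M−1)/M) and define the hitting time T_M = π/(2·λ_M). Then T_M/√M → π/(2√2) as M → ∞; in particular T_M = O(√M). -/

import Mathlib

open Filter Asymptotics

/-- `λ_M = arccos((M−1)/M)`, the argument of the unit-modulus eigenvalue
`(M−1 + i√(2M−1))/M` of the reduced transition matrix of the star-graph walk. -/
noncomputable def starLam (M : ℕ) : ℝ :=
  Real.arccos (((M : ℝ) - 1) / M)

/-- The hitting time `T_M = π/(2 λ_M)`. -/
noncomputable def starT (M : ℕ) : ℝ :=
  Real.pi / (2 * starLam M)

lemma starLam_pos {M : ℕ} (hM : 2 ≤ M) : 0 < starLam M := by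
  have hMpos : (0:ℝ) < M := by exact_mod_cast Nat.lt_of_lt_of_le (by norm_num) hM
  refine Real.arccos_pos.mpr ?_
  rw [div_lt_one hMpos]; linarith

lemma key_eq {M : ℕ} (hM : 2 ≤ M) :
    starT M / Real.sqrt M =
      Real.pi / (2 * Real.sqrt 2) * (Real.sin (starLam M / 2) / (starLam M / 2)) := by
  have hM2 : (2:ℝ) ≤ M := by exact_mod_cast hM
  have hMpos : (0:ℝ) < M := by linarith
  set l := starLam M with hl
  have hl0 : 0 < l := starLam_pos hM
  have hlpi : l ≤ Real.pi := Real.arccos_le_pi _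
  have hcos : Real.cos l = ((M:ℝ) - 1) / M := by
    apply Real.cos_arccos
    · have : (0:ℝ) ≤ ((M:ℝ) - 1) / M := div_nonneg (by linarith) hMpos.le
      linarith
    · rw [div_le_one hMpos]; linarith
  have hsin : Real.sin (l / 2) = Real.sqrt (1 / (2 * M)) := by
    rw [Real.sin_half_eq_sqrt hl0.le (by linarith [Real.pi_pos])]
    congr 1
    rw [hcos]
    field_simp
    ring
  have hprod : Real.sqrt M * (Real.sqrt 2 * Real.sin (l / 2)) = 1 := by
    rw [hsin, ← Real.sqrt_mul (by norm_num), ← Real.sqrt_mul hMpos.le]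
    rw [show (M:ℝ) * (2 * (1 / (2 * M))) = 1 by field_simp]
    exact Real.sqrt_one
  have hsM : Real.sqrt M ≠ 0 := by positivity
  have h2 : Real.sqrt 2 * Real.sqrt 2 = 2 := Real.mul_self_sqrt (by norm_num)
  have hs2 : (0:ℝ) < Real.sqrt 2 := by positivity
  have step : starT M / Real.sqrt M = starT M * (Real.sqrt 2 * Real.sin (l / 2)) := by
    rw [div_eq_iff hsM,
      show starT M * (Real.sqrt 2 * Real.sin (l / 2)) * Real.sqrt M
          = starT M * (Real.sqrt M * (Real.sqrt 2 * Real.sin (l / 2))) from by ring,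
      hprod, mul_one]
  rw [step, starT, ← hl]
  rw [show Real.pi / (2 * l) * (Real.sqrt 2 * Real.sin (l / 2))
      = Real.pi * Real.sqrt 2 * Real.sin (l / 2) / (2 * l) from by ring,
    show Real.pi / (2 * Real.sqrt 2) * (Real.sin (l / 2) / (l / 2))
      = Real.pi * Real.sin (l / 2) / (Real.sqrt 2 * l) from by
        rw [div_mul_div_comm]; congr 1 <;> ring,
    div_eq_div_iff (by positivity) (by positivity)]
  linear_combination Real.pi * Real.sin (l / 2) * l * h2

lemma starLam_tendsto : Tendsto (fun M : ℕ => starLam M) atTop (nhds 0) := by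
  have h1 : Tendsto (fun M : ℕ => ((M:ℝ) - 1) / M) atTop (nhds 1) := by
    have h2 : Tendsto (fun M : ℕ => 1 - ((M:ℝ))⁻¹) atTop (nhds 1) := by
      have := (tendsto_inv_atTop_zero (𝕜 := ℝ)).comp (tendsto_natCast_atTop_atTop (R := ℝ))
      simpa using (tendsto_const_nhds (x := (1:ℝ)) (f := atTop)).sub this
    refine h2.congr' ?_
    filter_upwards [eventually_ge_atTop 1] with M hM
    have hM0 : (M:ℝ) ≠ 0 := by
      have : (1:ℝ) ≤ M := by exact_mod_cast hM
      linarith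
    field_simp
  have := (Real.continuous_arccos.tendsto 1).comp h1
  simpa [starLam, Function.comp_def, Real.arccos_one] using this

lemma sin_div_tendsto : Tendsto (fun x : ℝ => Real.sin x / x) (nhdsWithin 0 {0}ᶜ) (nhds 1) := by
  have h := hasDerivAt_iff_tendsto_slope.mp (Real.hasDerivAt_sin 0)
  simp only [Real.cos_zero] at h
  refine h.congr ?_
  intro x
  simp [slope_def_field, Real.sin_zero]

/-- `T_M/√M → π/(2√2)` as `M → ∞`; in particular `T_M = O(√M)`. -/
theorem starT_asymptotics :
    Tendsto (fun M : ℕ => starT M / Real.sqrt M) atTop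
        (nhds (Real.pi / (2 * Real.sqrt 2))) ∧
      (fun M : ℕ => starT M) =O[atTop] fun M : ℕ => Real.sqrt M := by
  have htend : Tendsto (fun M : ℕ => starT M / Real.sqrt M) atTop
      (nhds (Real.pi / (2 * Real.sqrt 2))) := by
    have hhalf : Tendsto (fun M : ℕ => starLam M / 2) atTop (nhdsWithin 0 {0}ᶜ) := by
      apply tendsto_nhdsWithin_of_tendsto_nhds_of_eventually_within
      · simpa using starLam_tendsto.div_const 2
      · filter_upwards [eventually_ge_atTop 2] with M hM
        exact (div_pos (starLam_pos hM) (by norm_num)).ne'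
    have h1 : Tendsto (fun M : ℕ => Real.sin (starLam M / 2) / (starLam M / 2)) atTop
        (nhds 1) := sin_div_tendsto.comp hhalf
    have h2 : Tendsto (fun M : ℕ =>
        Real.pi / (2 * Real.sqrt 2) * (Real.sin (starLam M / 2) / (starLam M / 2))) atTop
        (nhds (Real.pi / (2 * Real.sqrt 2))) := by
      simpa using h1.const_mul (Real.pi / (2 * Real.sqrt 2))
    refine h2.congr' ?_
    filter_upwards [eventually_ge_atTop 2] with M hM
    exact (key_eq hM).symm
  refine ⟨htend, ?_⟩
  apply isBigO_of_div_tendsto_nhds (c := Real.pi / (2 * Real.sqrt 2))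
  · filter_upwards [eventually_ge_atTop 1] with M hM h0
    have : (0:ℝ) < M := by exact_mod_cast hM
    exact absurd h0 (by positivity)
  · exact htend
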